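/- For every μ ∈ (1/4, 3/4), the mapped steepening Gaussian Γ_μ(X) := γ(ℒ_μ(X); μ) tends to 0.2·μ^{−1/2} as X → 1/2 within {X ≠ 1/2}; that is, after composition with the domain mapping ℒ_μ (choosing the mapping parameter τ = μ), the feature of every mapped snapshot is located at the fixed reference coordinate X = 1/2, independently of μ. -/

import Mathlib

/-- The cutoff Gaussian θ(x; (a,b,c)). -/
noncomputable def theta (a b c x : ℝ) : ℝ :=
  if x < c then a * Real.exp (-(((x - c) / b) ^ 2)) else 0

/-- The steepening Gaussian γ(x; μ). -/
noncomputable def gammaFn (μ x : ℝ) : ℝ :=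
  theta (0.2 * μ ^ (-(1 : ℝ)/2)) 0.1 μ x +
    theta (0.2 * μ ^ (-(1 : ℝ)/2)) (0.004 * μ ^ (-(2 : ℝ))) (-μ) (-x)

/-- The parametrized domain mapping ℒ_τ(X) := X + 4(τ − 1/2)·X·(1 − X). -/
noncomputable def Lmap (τ X : ℝ) : ℝ := X + 4 * (τ - 1/2) * X * (1 - X)

lemma gamma_tendsto (μ : ℝ) :
    Filter.Tendsto (gammaFn μ) (nhdsWithin μ {x : ℝ | x ≠ μ})
      (nhds (0.2 * μ ^ (-(1 : ℝ)/2))) := by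
  set a : ℝ := 0.2 * μ ^ (-(1 : ℝ)/2) with ha
  have h := nhdsLT_sup_nhdsGT (a := μ)
  rw [show ({x : ℝ | x ≠ μ} : Set ℝ) = {μ}ᶜ from rfl, ← h, Filter.tendsto_sup]
  constructor
  · have hc : Filter.Tendsto (fun x : ℝ => a * Real.exp (-(((x - μ) / 0.1) ^ 2)))
        (nhdsWithin μ (Set.Iio μ)) (nhds a) := by
      have : Continuous (fun x : ℝ => a * Real.exp (-(((x - μ) / 0.1) ^ 2))) := by
        continuity
      have h2 := (this.tendsto μ).mono_left (nhdsWithin_le_nhds (s := Set.Iio μ))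
      simpa using h2
    refine hc.congr' ?_
    filter_upwards [self_mem_nhdsWithin] with x hx
    have hx' : x < μ := hx
    simp only [gammaFn, theta, if_pos hx', if_neg (by simp; linarith : ¬ -x < -μ)]
    ring
  · have hc : Filter.Tendsto
        (fun x : ℝ => a * Real.exp (-(((-x - -μ) / (0.004 * μ ^ (-(2 : ℝ)))) ^ 2)))
        (nhdsWithin μ (Set.Ioi μ)) (nhds a) := by
      have : Continuous
          (fun x : ℝ => a * Real.exp (-(((-x - -μ) / (0.004 * μ ^ (-(2 : ℝ)))) ^ 2))) := by
        continuity
      have h2 := (this.tendsto μ).mono_left (nhdsWithin_le_nhds (s := Set.Ioi μ))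
      simpa using h2
    refine hc.congr' ?_
    filter_upwards [self_mem_nhdsWithin] with x hx
    have hx' : μ < x := hx
    simp only [gammaFn, theta, if_neg (by linarith : ¬ x < μ),
      if_pos (by linarith : -x < -μ)]
    ring

lemma Lmap_tendsto (μ : ℝ) (hμ : μ ∈ Set.Ioo (1/4 : ℝ) (3/4)) :
    Filter.Tendsto (Lmap μ) (nhdsWithin (1/2) {X : ℝ | X ≠ 1/2})
      (nhdsWithin μ {x : ℝ | x ≠ μ}) := by
  obtain ⟨h1, h2⟩ := hμ
  rw [tendsto_nhdsWithin_iff]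
  constructor
  · have hc : Continuous (Lmap μ) := by unfold Lmap; continuity
    have hL : Lmap μ (1/2) = μ := by unfold Lmap; ring
    have := hc.tendsto (1/2)
    rw [hL] at this
    exact this.mono_left nhdsWithin_le_nhds
  · have hmem : Set.Ioo (-(1/2) : ℝ) (3/2) ∈ nhdsWithin (1/2 : ℝ) {X : ℝ | X ≠ 1/2} := by
      exact nhdsWithin_le_nhds (Ioo_mem_nhds (by norm_num) (by norm_num))
    filter_upwards [hmem, self_mem_nhdsWithin] with X hX hX'
    have hXne : X ≠ 1/2 := hX'
    have hfac : Lmap μ X - μ = (X - 1/2) * (1 - 4 * (μ - 1/2) * (X - 1/2)) := by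
      unfold Lmap; ring
    have h3 : (1 : ℝ) - 4 * (μ - 1/2) * (X - 1/2) > 0 := by
      obtain ⟨ha, hb⟩ := hX
      nlinarith [sq_nonneg (X - 1/2), sq_nonneg (μ - 1/2)]
    have : Lmap μ X - μ ≠ 0 := by
      rw [hfac]
      exact mul_ne_zero (sub_ne_zero.mpr hXne) (ne_of_gt h3)
    simpa [sub_ne_zero] using this

/-- For μ ∈ (1/4, 3/4), the mapped steepening Gaussian Γ_μ(X) := γ(ℒ_μ(X); μ) tends to
0.2·μ^{−1/2} as X → 1/2 through values X ≠ 1/2: after composition with ℒ_μ the feature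
sits at the fixed reference coordinate X = 1/2, independently of μ. -/
theorem mapped_steepening_gaussian_limit (μ : ℝ) (hμ : μ ∈ Set.Ioo (1/4 : ℝ) (3/4)) :
    Filter.Tendsto (fun X => gammaFn μ (Lmap μ X))
      (nhdsWithin (1/2) {X : ℝ | X ≠ 1/2})
      (nhds (0.2 * μ ^ (-(1 : ℝ)/2))) := by
  exact (gamma_tendsto μ).comp (Lmap_tendsto μ hμ)
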